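/- arXiv:1901.08464 — 2 statements merged into one kernel-verified Lean document; each statement's English description precedes it below -/
import Mathlib

section
/- If 𝒯 is an infinite family of complete L-theories that has no e-minimal subfamily of the form 𝒯_φ — that is, for no L-sentence φ is 𝒯_φ infinite and e-minimal — then 𝒯 is not e-totally transcendental, i.e., RS(𝒯) = ∞. -/
open FirstOrder Language Cardinal Set

universe u v w

variable {L : FirstOrder.Language.{u, v}}

/-- A complete theory: a satisfiable set of sentences containing each sentence or its
negation (`Theory.IsMaximal` in Mathlib). -/
abbrev CTheory (L : FirstOrder.Language.{u, v}) : Type max u v :=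
  {T : L.Theory // T.IsMaximal}

/-- The neighbourhood `𝒯_φ = {T ∈ 𝒯 | φ ∈ T}`. -/
def nbhd (𝒯 : Set (CTheory L)) (φ : L.Sentence) : Set (CTheory L) :=
  {T | T ∈ 𝒯 ∧ φ ∈ T.1}

/-- `T` is an accumulation point of `𝒯` if for every sentence `φ ∈ T` the set `𝒯_φ` is
infinite. -/
def IsAccPoint (𝒯 : Set (CTheory L)) (T : CTheory L) : Prop :=
  ∀ φ : L.Sentence, φ ∈ T.1 → (nbhd 𝒯 φ).Infinite

/-- The `E`-closure of `𝒯`: `𝒯` together with all its accumulation points. -/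
def ClE (𝒯 : Set (CTheory L)) : Set (CTheory L) :=
  𝒯 ∪ {T | IsAccPoint 𝒯 T}

/-- The `e`-spectrum of `𝒯`: the cardinality of the set of accumulation points of `𝒯`. -/
noncomputable def eSp (𝒯 : Set (CTheory L)) : Cardinal :=
  Cardinal.mk {T : CTheory L // IsAccPoint 𝒯 T}

/-- Two sentences are inconsistent if `{φ, ψ}` is unsatisfiable. -/
def Inconsistent (φ ψ : L.Sentence) : Prop :=
  ¬ FirstOrder.Language.Theory.IsSatisfiable ({φ, ψ} : L.Theory)

open Classical in
/-- `RSge α 𝒯` says `RS(𝒯) ≥ α`: `RS(𝒯) ≥ 0` iff `𝒯 ≠ ∅`; `RS(𝒯) ≥ 1` iff `𝒯` is infinite;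
for `β ≥ 1`, `RS(𝒯) ≥ β + 1` iff there are pairwise inconsistent sentences `φ_n`, `n ∈ ℕ`,
with `RS(𝒯_{φ_n}) ≥ β` for all `n`; for limit `λ`, `RS(𝒯) ≥ λ` iff `RS(𝒯) ≥ β` for all
`β < λ`. -/
noncomputable def RSge (α : Ordinal.{w}) : Set (CTheory L) → Prop :=
  @Ordinal.limitRecOn (fun _ => Set (CTheory L) → Prop) α
    (fun 𝒯 => 𝒯.Nonempty)
    (fun β ih 𝒯 =>
      if β = 0 then 𝒯.Infinite
      else ∃ φ : ℕ → L.Sentence,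
        (∀ m n : ℕ, m ≠ n → Inconsistent (φ m) (φ n)) ∧ ∀ k : ℕ, ih (nbhd 𝒯 (φ k)))
    (fun β _ ih 𝒯 => ∀ γ : Ordinal, ∀ h : γ < β, ih γ h 𝒯)

/-- `RS(𝒯) = α` for an ordinal `α`: `RS(𝒯) ≥ α` but not `RS(𝒯) ≥ α + 1`. -/
def RSeq (𝒯 : Set (CTheory L)) (α : Ordinal.{w}) : Prop :=
  RSge α 𝒯 ∧ ¬ RSge (α + 1) 𝒯

/-- `RS(𝒯) = ∞`: `RS(𝒯) ≥ α` for every ordinal `α`. -/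
def RSinf (𝒯 : Set (CTheory L)) : Prop :=
  ∀ α : Ordinal.{w}, RSge α 𝒯

/-- `ds(𝒯) = n` (relative to `RS(𝒯) = α`): `n` is the largest natural number for which
there exist `n` pairwise inconsistent sentences `φ_1, …, φ_n` with `RS(𝒯_{φ_i}) = α`. -/
def dsEq (𝒯 : Set (CTheory L)) (α : Ordinal.{w}) (n : ℕ) : Prop :=
  IsGreatest {m : ℕ | ∃ φ : Fin m → L.Sentence,
    (∀ i j : Fin m, i ≠ j → Inconsistent (φ i) (φ j)) ∧
    ∀ i : Fin m, RSeq (nbhd 𝒯 (φ i)) α} n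

/-- `𝒯` is `e`-minimal: for every sentence `φ`, `𝒯_φ` is finite or `𝒯_{¬φ}` is finite. -/
def EMinimal (𝒯 : Set (CTheory L)) : Prop :=
  ∀ φ : L.Sentence, (nbhd 𝒯 φ).Finite ∨ (nbhd 𝒯 φ.not).Finite

/-- `𝒯` is `a`-minimal: `𝒯` has infinitely many accumulation points and for every sentence
`φ`, `𝒯_φ` or `𝒯_{¬φ}` has only finitely many accumulation points. -/
def AMinimal (𝒯 : Set (CTheory L)) : Prop :=
  {T : CTheory L | IsAccPoint 𝒯 T}.Infinite ∧
  ∀ φ : L.Sentence,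
    {T : CTheory L | IsAccPoint (nbhd 𝒯 φ) T}.Finite ∨
    {T : CTheory L | IsAccPoint (nbhd 𝒯 φ.not) T}.Finite

/-- `𝒯` is `α`-minimal: `RS(𝒯) = α` and for every sentence `φ`, `RS(𝒯_φ) < α` or
`RS(𝒯_{¬φ}) < α`. -/
def AlphaMinimal (𝒯 : Set (CTheory L)) (α : Ordinal.{w}) : Prop :=
  RSeq 𝒯 α ∧
  ∀ φ : L.Sentence, ¬ RSge α (nbhd 𝒯 φ) ∨ ¬ RSge α (nbhd 𝒯 φ.not)

section AuxProof

variable {L : FirstOrder.Language.{u, v}}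

/-- Semantic implication between sentences. -/
def SImp (φ ψ : L.Sentence) : Prop :=
  ∀ (M : Type (max u v)) [L.Structure M], M ⊨ φ → M ⊨ ψ

lemma sImp_refl (φ : L.Sentence) : SImp φ φ := fun _ _ h => h

lemma sImp_trans {φ ψ χ : L.Sentence} (h1 : SImp φ ψ) (h2 : SImp ψ χ) : SImp φ χ :=
  fun M _ h => h2 M (h1 M h)

lemma mem_of_sImp {T : CTheory L} {φ ψ : L.Sentence} (h : SImp φ ψ) (hφ : φ ∈ T.1) :
    ψ ∈ T.1 := by
  refine T.2.mem_of_models (FirstOrder.Language.Theory.models_sentence_iff.2 fun M => ?_)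
  exact h M (M.is_model.realize_of_mem φ hφ)

lemma sImp_inf_left (φ ψ : L.Sentence) : SImp (φ ⊓ ψ) φ := by
  intro M _ hm
  exact (Formula.realize_inf.1 hm).1

lemma sImp_inf_right (φ ψ : L.Sentence) : SImp (φ ⊓ ψ) ψ := by
  intro M _ hm
  exact (Formula.realize_inf.1 hm).2

lemma inf_mem_iff {T : CTheory L} {φ ψ : L.Sentence} :
    φ ⊓ ψ ∈ T.1 ↔ φ ∈ T.1 ∧ ψ ∈ T.1 := by
  refine ⟨fun h => ⟨mem_of_sImp (sImp_inf_left φ ψ) h, mem_of_sImp (sImp_inf_right φ ψ) h⟩, ?_⟩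
  rintro ⟨h1, h2⟩
  refine T.2.mem_of_models (FirstOrder.Language.Theory.models_sentence_iff.2 fun M => ?_)
  exact Formula.realize_inf.2 ⟨M.is_model.realize_of_mem φ h1, M.is_model.realize_of_mem ψ h2⟩

lemma top_mem {T : CTheory L} : (⊤ : L.Sentence) ∈ T.1 :=
  T.2.mem_of_models (FirstOrder.Language.Theory.models_sentence_iff.2 fun _M =>
    Formula.realize_top.2 trivial)

lemma nbhd_nbhd (𝒯 : Set (CTheory L)) (σ ψ : L.Sentence) :
    nbhd (nbhd 𝒯 σ) ψ = nbhd 𝒯 (σ ⊓ ψ) := by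
  ext T
  simp only [nbhd, Set.mem_setOf_eq, inf_mem_iff]
  tauto

lemma nbhd_nbhd_of_sImp {𝒯 : Set (CTheory L)} {σ χ : L.Sentence} (h : SImp χ σ) :
    nbhd (nbhd 𝒯 σ) χ = nbhd 𝒯 χ := by
  ext T
  simp only [nbhd, Set.mem_setOf_eq]
  exact ⟨fun ⟨⟨h1, _⟩, h3⟩ => ⟨h1, h3⟩, fun ⟨h1, h3⟩ => ⟨⟨h1, mem_of_sImp h h3⟩, h3⟩⟩

lemma RSge_zero (S : Set (CTheory L)) : RSge (0 : Ordinal.{w}) S ↔ S.Nonempty := by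
  unfold RSge
  rw [Ordinal.limitRecOn_zero]

lemma RSge_one (S : Set (CTheory L)) : RSge ((0 : Ordinal.{w}) + 1) S ↔ S.Infinite := by
  unfold RSge
  rw [Ordinal.add_one_eq_succ, Ordinal.limitRecOn_succ]
  rw [if_pos rfl]

lemma RSge_succ_of_ne {β : Ordinal.{w}} (hβ : β ≠ 0) (S : Set (CTheory L)) :
    RSge (β + 1) S ↔ ∃ φ : ℕ → L.Sentence,
      (∀ m n : ℕ, m ≠ n → Inconsistent (φ m) (φ n)) ∧
      ∀ k : ℕ, RSge β (nbhd S (φ k)) := by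
  unfold RSge
  rw [Ordinal.add_one_eq_succ, Ordinal.limitRecOn_succ]
  rw [if_neg hβ]

lemma RSge_limit {β : Ordinal.{w}} (hβ : Order.IsSuccLimit β) (S : Set (CTheory L)) :
    RSge β S ↔ ∀ γ < β, RSge γ S := by
  unfold RSge
  rw [Ordinal.limitRecOn_limit _ _ _ _ hβ]

lemma key_lemma (𝒯 : Set (CTheory L))
    (hno : ∀ φ : L.Sentence, ¬ ((nbhd 𝒯 φ).Infinite ∧ EMinimal (nbhd 𝒯 φ))) :
    ∀ α : Ordinal.{w}, ∀ σ : L.Sentence, (nbhd 𝒯 σ).Infinite → RSge α (nbhd 𝒯 σ) := by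
  -- the splitting property
  have split : ∀ σ : L.Sentence, (nbhd 𝒯 σ).Infinite →
      ∃ ψ : L.Sentence, (nbhd 𝒯 (σ ⊓ ψ)).Infinite ∧ (nbhd 𝒯 (σ ⊓ ψ.not)).Infinite := by
    intro σ h
    have h2 : ¬ EMinimal (nbhd 𝒯 σ) := fun hE => hno σ ⟨h, hE⟩
    simp only [EMinimal, not_forall, not_or] at h2
    obtain ⟨ψ, h3, h4⟩ := h2
    rw [nbhd_nbhd] at h3 h4
    exact ⟨ψ, h3, h4⟩
  intro α
  induction α using Ordinal.limitRecOn with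
  | zero => exact fun σ h => (RSge_zero _).2 h.nonempty
  | add_one β ih =>
    intro σ h
    by_cases hβ : β = 0
    · subst hβ
      exact (RSge_one _).2 h
    · rw [RSge_succ_of_ne hβ]
      -- iterated splitting
      set Good : L.Sentence → Prop := fun τ => (nbhd 𝒯 τ).Infinite with hGood
      let G : {τ : L.Sentence // Good τ} → {τ : L.Sentence // Good τ} := fun p =>
        ⟨p.1 ⊓ (Classical.choose (split p.1 p.2)).not,
          (Classical.choose_spec (split p.1 p.2)).2⟩
      let a : ℕ → {τ : L.Sentence // Good τ} := fun n => G^[n] ⟨σ, h⟩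
      let c : ℕ → L.Sentence := fun n => Classical.choose (split (a n).1 (a n).2)
      let χ : ℕ → L.Sentence := fun n => (a n).1 ⊓ c n
      have hχgood : ∀ n, Good (χ n) := fun n => (Classical.choose_spec (split (a n).1 (a n).2)).1
      have ha_succ : ∀ n, (a (n + 1)).1 = (a n).1 ⊓ (c n).not := by
        intro n
        show (G^[n+1] ⟨σ, h⟩).1 = _
        rw [Function.iterate_succ_apply']
      have hstep : ∀ n, SImp (a (n + 1)).1 (a n).1 := by
        intro n
        rw [ha_succ n]
        exact sImp_inf_left _ _
      have hchain : ∀ m n, m ≤ n → SImp (a n).1 (a m).1 := by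
        intro m n hmn
        induction n with
        | zero => obtain rfl : m = 0 := Nat.le_zero.1 hmn; exact sImp_refl _
        | succ k ihk =>
          rcases Nat.le_succ_iff.1 hmn with h' | h'
          · exact sImp_trans (hstep k) (ihk h')
          · subst h'; exact sImp_refl _
      have hχ_a : ∀ n, SImp (χ n) (a n).1 := fun n => sImp_inf_left _ _
      have hχ_σ : ∀ n, SImp (χ n) σ := by
        intro n
        have h0 : (a 0).1 = σ := rfl
        exact sImp_trans (hχ_a n) (h0 ▸ hchain 0 n (Nat.zero_le n))
      -- pairwise inconsistency
      have hinc : ∀ m n, m < n → Inconsistent (χ m) (χ n) := by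
        intro m n hmn hsat
        obtain ⟨M⟩ := hsat
        have hm : M ⊨ χ m := M.is_model.realize_of_mem (χ m) (Set.mem_insert _ _)
        have hn : M ⊨ χ n := M.is_model.realize_of_mem (χ n)
          (Set.mem_insert_of_mem _ rfl)
        have h1 : M ⊨ c m := sImp_inf_right (a m).1 (c m) M hm
        have h2 : M ⊨ (a (m + 1)).1 :=
          hchain (m + 1) n hmn M (hχ_a n M hn)
        have h3 : M ⊨ (c m).not := by
          rw [ha_succ m] at h2
          exact sImp_inf_right _ _ M h2
        exact Formula.realize_not.1 h3 h1
      refine ⟨χ, fun m n hmn => ?_, fun k => ?_⟩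
      · rcases Nat.lt_or_ge m n with h' | h'
        · exact hinc m n h'
        · have h'' : n < m := lt_of_le_of_ne h' (Ne.symm hmn)
          intro hsat
          rw [Set.pair_comm] at hsat
          exact hinc n m h'' hsat
      · rw [nbhd_nbhd_of_sImp (hχ_σ k)]
        exact ih (χ k) (hχgood k)
  | limit β hβ ih =>
    intro σ h
    rw [RSge_limit hβ]
    exact fun γ hγ => ih γ hγ σ h

end AuxProof

/-- Proposition 3.2: if an infinite family `𝒯` has no `e`-minimal subfamily
`𝒯_φ`, then `𝒯` is not `e`-totally transcendental, i.e. `RS(𝒯) = ∞`. -/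
theorem rank_infty_of_no_eMinimal_subfamily (𝒯 : Set (CTheory L)) (hinf : 𝒯.Infinite)
    (hno : ∀ φ : L.Sentence, ¬ ((nbhd 𝒯 φ).Infinite ∧ EMinimal (nbhd 𝒯 φ))) :
    (∀ α : Ordinal.{w}, RSge α 𝒯) := by
  have heq : nbhd 𝒯 (⊤ : L.Sentence) = 𝒯 := by
    ext T
    simp only [nbhd, Set.mem_setOf_eq]
    exact ⟨fun ⟨h1, _⟩ => h1, fun h1 => ⟨h1, top_mem⟩⟩
  intro α
  have := key_lemma 𝒯 hno α ⊤ (by rw [heq]; exact hinf)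
  rwa [heq] at this
end

section
/- If the language L has at most countably many sentences and 𝒯 is a family of complete L-theories with |Cl_E(𝒯)| = 2^ℵ₀, then RS(𝒯) = ∞ (i.e., 𝒯 is not e-totally transcendental). -/
open FirstOrder Language Cardinal Set

universe u v w

variable {L : FirstOrder.Language.{u, v}}

section Helpers

lemma ctheory_mem_iff (T : CTheory L) (M : T.1.ModelType) (φ : L.Sentence) :
    φ ∈ T.1 ↔ M ⊨ φ :=
  (T.2.mem_iff_models φ).trans (Theory.IsComplete.realize_sentence_iff T.2.isComplete φ M).symm

lemma ctheory_not_mem_iff (T : CTheory L) (φ : L.Sentence) : φ.not ∈ T.1 ↔ φ ∉ T.1 := by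
  obtain ⟨M⟩ := id T.2.1
  rw [ctheory_mem_iff T M, ctheory_mem_iff T M, Sentence.realize_not]

lemma ctheory_inf_mem_iff (T : CTheory L) (φ ψ : L.Sentence) :
    φ ⊓ ψ ∈ T.1 ↔ φ ∈ T.1 ∧ ψ ∈ T.1 := by
  obtain ⟨M⟩ := id T.2.1
  rw [ctheory_mem_iff T M, ctheory_mem_iff T M, ctheory_mem_iff T M]
  exact Formula.realize_inf

lemma mem_clE_nbhd {𝒯 : Set (CTheory L)} {T : CTheory L} {φ : L.Sentence}
    (hT : T ∈ ClE 𝒯) (hφ : φ ∈ T.1) : T ∈ ClE (nbhd 𝒯 φ) := by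
  rcases hT with hT | hT
  · exact Or.inl ⟨hT, hφ⟩
  · refine Or.inr fun ψ hψ => ?_
    have h2 : φ ⊓ ψ ∈ T.1 := (ctheory_inf_mem_iff T φ ψ).2 ⟨hφ, hψ⟩
    refine Set.Infinite.mono ?_ (hT (φ ⊓ ψ) h2)
    intro T' h'
    obtain ⟨hφ', hψ'⟩ := (ctheory_inf_mem_iff T' φ ψ).1 h'.2
    exact ⟨⟨h'.1, hφ'⟩, hψ'⟩

lemma clE_countable_of_forall (hc : Countable L.Sentence) (𝒯 : Set (CTheory L))
    (H : ∀ φ : L.Sentence, (ClE (nbhd 𝒯 φ)).Countable ∨ (ClE (nbhd 𝒯 φ.not)).Countable) :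
    (ClE 𝒯).Countable := by
  set S : Set L.Sentence := {φ | (ClE (nbhd 𝒯 φ)).Countable} with hS
  have hsub : ClE 𝒯 ⊆ (⋃ φ ∈ S, ClE (nbhd 𝒯 φ)) ∪ {T | ∀ φ ∈ T.1, φ ∉ S} := by
    intro T hT
    by_cases hex : ∃ φ ∈ T.1, φ ∈ S
    · obtain ⟨φ, h1, h2⟩ := hex
      exact Or.inl (Set.mem_biUnion h2 (mem_clE_nbhd hT h1))
    · push_neg at hex
      exact Or.inr hex
  refine Set.Countable.mono hsub (Set.Countable.union ?_ ?_)
  · exact Set.Countable.biUnion (Set.to_countable S) fun φ hφ => hφ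
  · refine Set.Subsingleton.countable ?_
    have key : ∀ T T' : CTheory L, T ∈ {T : CTheory L | ∀ φ ∈ T.1, φ ∉ S} →
        T' ∈ {T : CTheory L | ∀ φ ∈ T.1, φ ∉ S} → ∀ φ, φ ∈ T.1 → φ ∈ T'.1 := by
      intro T T' hT hT' φ hφ
      have h1 : φ ∉ S := hT φ hφ
      have h2 : φ.not ∈ S := (H φ).resolve_left h1
      have h3 : φ.not ∉ T'.1 := fun hm => hT' φ.not hm h2
      exact (T'.2.2 φ).resolve_right h3
    intro T hT T' hT'
    refine Subtype.ext (Set.ext fun φ => ⟨key T T' hT hT' φ, key T' T hT' hT φ⟩)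

lemma exists_split (hc : Countable L.Sentence) (𝒯 : Set (CTheory L))
    (h : ¬ (ClE 𝒯).Countable) :
    ∃ φ : L.Sentence, ¬ (ClE (nbhd 𝒯 φ)).Countable ∧ ¬ (ClE (nbhd 𝒯 φ.not)).Countable := by
  by_contra hcon
  push_neg at hcon
  refine h (clE_countable_of_forall hc 𝒯 fun φ => ?_)
  by_cases h1 : (ClE (nbhd 𝒯 φ)).Countable
  · exact Or.inl h1
  · exact Or.inr (hcon φ h1)

lemma clE_eq_of_finite {𝒯 : Set (CTheory L)} (hfin : 𝒯.Finite) : ClE 𝒯 = 𝒯 := by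
  refine subset_antisymm ?_ Set.subset_union_left
  rintro T (hT | hT)
  · exact hT
  · exfalso
    have hφ : ∃ φ, φ ∈ T.1 := by
      rcases T.2.2 ⊥ with hb | hb
      exacts [⟨⊥, hb⟩, ⟨Formula.not ⊥, hb⟩]
    obtain ⟨φ, hmem⟩ := hφ
    exact hT φ hmem (hfin.subset fun T' h' => h'.1)

lemma infinite_of_not_countable {𝒯 : Set (CTheory L)} (h : ¬ (ClE 𝒯).Countable) :
    𝒯.Infinite := by
  by_contra hfin
  rw [Set.not_infinite] at hfin
  have hco := hfin.countable
  rw [← clE_eq_of_finite hfin] at hco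
  exact h hco

/-- `negConj ψ n` is the conjunction `¬ψ 0 ∧ ⋯ ∧ ¬ψ (n-1)`. -/
def negConj (ψ : ℕ → L.Sentence) : ℕ → L.Sentence
  | 0 => (⊥ : L.Sentence).not
  | n + 1 => negConj ψ n ⊓ (ψ n).not

lemma realize_negConj {M : Type*} [L.Structure M] [Nonempty M] (ψ : ℕ → L.Sentence) :
    ∀ n, (M ⊨ negConj ψ n ↔ ∀ i < n, ¬ M ⊨ ψ i)
  | 0 => by
    refine iff_of_true ?_ fun i hi => absurd hi (Nat.not_lt_zero i)
    rw [show negConj ψ 0 = (⊥ : L.Sentence).not from rfl, Sentence.realize_not]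
    exact fun hb => Formula.realize_bot.1 hb
  | n + 1 => by
    have : (M ⊨ negConj ψ n ⊓ (ψ n).not) ↔ (M ⊨ negConj ψ n) ∧ (M ⊨ (ψ n).not) :=
      Formula.realize_inf
    rw [negConj, this, realize_negConj ψ n, Sentence.realize_not, Nat.forall_lt_succ_right]

lemma chi_mem_iff (ψ : ℕ → L.Sentence) (n : ℕ) (T : CTheory L) :
    negConj ψ n ⊓ ψ n ∈ T.1 ↔ ψ n ∈ T.1 ∧ ∀ i < n, ψ i ∉ T.1 := by
  obtain ⟨M⟩ := id T.2.1
  have hm : ∀ χ : L.Sentence, χ ∈ T.1 ↔ M ⊨ χ := ctheory_mem_iff T M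
  rw [ctheory_inf_mem_iff, hm (negConj ψ n), realize_negConj ψ n, and_comm]
  simp only [hm]

lemma inconsistent_comm {φ ψ : L.Sentence} (h : Inconsistent φ ψ) : Inconsistent ψ φ := by
  unfold Inconsistent at *
  rwa [Set.pair_comm]

lemma chi_inconsistent (ψ : ℕ → L.Sentence) {m n : ℕ} (hlt : m < n) :
    Inconsistent (negConj ψ m ⊓ ψ m) (negConj ψ n ⊓ ψ n) := by
  intro hsat
  obtain ⟨M⟩ := hsat
  have h1 : (M : Type _) ⊨ (negConj ψ m ⊓ ψ m) :=
    Theory.realize_sentence_of_mem (M := M)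
      ({negConj ψ m ⊓ ψ m, negConj ψ n ⊓ ψ n} : L.Theory) (Set.mem_insert _ _)
  have h2 : (M : Type _) ⊨ (negConj ψ n ⊓ ψ n) :=
    Theory.realize_sentence_of_mem (M := M)
      ({negConj ψ m ⊓ ψ m, negConj ψ n ⊓ ψ n} : L.Theory) (Set.mem_insert_of_mem _ rfl)
  have hψm : (M : Type _) ⊨ ψ m := (Formula.realize_inf.1 h1).2
  have hneg : ¬ (M : Type _) ⊨ ψ m :=
    (realize_negConj ψ n).1 (Formula.realize_inf.1 h2).1 m hlt
  exact hneg hψm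

open Classical in
lemma RSge_zero_iff (𝒯 : Set (CTheory L)) : RSge (0 : Ordinal.{w}) 𝒯 ↔ 𝒯.Nonempty := by
  unfold RSge
  rw [Ordinal.limitRecOn_zero]

open Classical in
lemma RSge_succ_iff (β : Ordinal.{w}) (𝒯 : Set (CTheory L)) :
    RSge (Order.succ β) 𝒯 ↔
      if β = 0 then 𝒯.Infinite
      else ∃ φ : ℕ → L.Sentence,
        (∀ m n : ℕ, m ≠ n → Inconsistent (φ m) (φ n)) ∧
          ∀ k : ℕ, RSge β (nbhd 𝒯 (φ k)) := by
  unfold RSge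
  rw [Ordinal.limitRecOn_succ]

open Classical in
lemma RSge_limit_iff {β : Ordinal.{w}} (hβ : Order.IsSuccLimit β) (𝒯 : Set (CTheory L)) :
    RSge β 𝒯 ↔ ∀ γ < β, RSge γ 𝒯 := by
  unfold RSge
  rw [Ordinal.limitRecOn_limit _ _ _ _ hβ]

lemma rsge_of_not_countable (hc : Countable L.Sentence) :
    ∀ α : Ordinal.{w}, ∀ 𝒯 : Set (CTheory L), ¬ (ClE 𝒯).Countable → RSge α 𝒯 := by
  intro α
  induction α using Ordinal.induction with
  | h α IH =>
    intro 𝒯 h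
    rcases Ordinal.zero_or_succ_or_isSuccLimit α with rfl | ⟨β, rfl⟩ | hlim
    · rw [RSge_zero_iff]
      exact (infinite_of_not_countable h).nonempty
    · rw [RSge_succ_iff]
      by_cases hβ : β = 0
      · rw [if_pos hβ]
        exact infinite_of_not_countable h
      · rw [if_neg hβ]
        set step : {S : Set (CTheory L) // ¬ (ClE S).Countable} →
            {S : Set (CTheory L) // ¬ (ClE S).Countable} :=
          fun p => ⟨nbhd p.1 ((exists_split hc p.1 p.2).choose).not,
            (exists_split hc p.1 p.2).choose_spec.2⟩ with hstep
        set F : ℕ → {S : Set (CTheory L) // ¬ (ClE S).Countable} :=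
          fun n => step^[n] ⟨𝒯, h⟩ with hFdef
        set ψ : ℕ → L.Sentence := fun n => (exists_split hc (F n).1 (F n).2).choose with hψdef
        have hF : ∀ n, (F (n + 1)).1 = nbhd (F n).1 (ψ n).not := by
          intro n
          show (step^[n + 1] _).1 = _
          rw [Function.iterate_succ_apply']
        have hψ : ∀ n, ¬ (ClE (nbhd (F n).1 (ψ n))).Countable :=
          fun n => (exists_split hc (F n).1 (F n).2).choose_spec.1
        have hDmem : ∀ n, ∀ T : CTheory L,
            T ∈ (F n).1 ↔ T ∈ 𝒯 ∧ ∀ i < n, ψ i ∉ T.1 := by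
          intro n
          induction n with
          | zero =>
            intro T
            simp only [hFdef, Function.iterate_zero, id_eq]
            exact ⟨fun hT => ⟨hT, fun i hi => absurd hi (Nat.not_lt_zero i)⟩, fun hT => hT.1⟩
          | succ n ih =>
            intro T
            rw [hF n]
            constructor
            · rintro ⟨h1, h2⟩
              obtain ⟨h3, h4⟩ := (ih T).1 h1
              refine ⟨h3, fun i hi => ?_⟩
              rcases Nat.lt_succ_iff_lt_or_eq.1 hi with hi' | rfl
              · exact h4 i hi'
              · exact (ctheory_not_mem_iff T (ψ i)).1 h2
            · rintro ⟨h3, h4⟩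
              exact ⟨(ih T).2 ⟨h3, fun i hi => h4 i (hi.trans (Nat.lt_succ_self n))⟩,
                (ctheory_not_mem_iff T (ψ n)).2 (h4 n (Nat.lt_succ_self n))⟩
        refine ⟨fun n => negConj ψ n ⊓ ψ n, fun m n hmn => ?_, fun k => ?_⟩
        · rcases Ne.lt_or_gt hmn with hlt | hlt
          · exact chi_inconsistent ψ hlt
          · exact inconsistent_comm (chi_inconsistent ψ hlt)
        · have heq : nbhd 𝒯 (negConj ψ k ⊓ ψ k) = nbhd (F k).1 (ψ k) := by
            ext T
            show T ∈ 𝒯 ∧ negConj ψ k ⊓ ψ k ∈ T.1 ↔ T ∈ (F k).1 ∧ ψ k ∈ T.1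
            rw [chi_mem_iff, hDmem k T]
            tauto
          rw [heq]
          exact IH β (Order.lt_succ β) _ (hψ k)
    · rw [RSge_limit_iff hlim]
      exact fun γ hγ => IH γ hγ 𝒯 h

end Helpers

/-- Proposition 4.4: if the language has at most countably many sentences
and `|Cl_E(𝒯)| = 2^ℵ₀`, then `RS(𝒯) = ∞`. -/
theorem rank_infty_of_continuum_clE (𝒯 : Set (CTheory L))
    (hL : Cardinal.mk L.Sentence ≤ Cardinal.aleph0)
    (h : Cardinal.mk ↥(ClE 𝒯) = (2 : Cardinal) ^ Cardinal.aleph0) :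
    (∀ α : Ordinal.{w}, RSge α 𝒯) := by
  have hc : Countable L.Sentence := Cardinal.mk_le_aleph0_iff.1 hL
  intro α
  refine rsge_of_not_countable hc α 𝒯 fun hcount => ?_
  have h1 : Cardinal.mk ↥(ClE 𝒯) ≤ Cardinal.aleph0 := by
    have := hcount.to_subtype
    exact Cardinal.mk_le_aleph0
  rw [h] at h1
  exact (Cardinal.cantor Cardinal.aleph0).not_ge h1
end
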